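/- arXiv:1001.2662 — 2 statements merged into one kernel-verified Lean document; each statement's English description precedes it below -/
import Mathlib

section
/- For any q-ary discrete memoryless channel W, the symmetric capacity satisfies I(W) ≤ 2(q−1)·(log_q e)·√(1 − Z(W)²). -/
open MeasureTheory Filter Real
open scoped Classical

noncomputable section

namespace Polar

/-- `IsChannel W` : `W x y` is the probability of output `y` given input `x`,
each row is a probability distribution. -/
def IsChannel {X Y : Type*} (W : X → Y → ℝ) : Prop :=
  (∀ x y, 0 ≤ W x y) ∧ ∀ x, HasSum (W x) 1

/-- Bhattacharyya parameter `Z_{x,x'}(W)` between inputs `x` and `x'`. -/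
def Zb {X Y : Type*} (W : X → Y → ℝ) (x x' : X) : ℝ :=
  ∑' y, Real.sqrt (W x y * W x' y)

/-- Average Bhattacharyya parameter `Z(W)`. -/
def Zavg {X Y : Type*} [Fintype X] (W : X → Y → ℝ) : ℝ :=
  (1 / ((Fintype.card X : ℝ) * ((Fintype.card X : ℝ) - 1))) *
    ∑ p ∈ Finset.univ.offDiag, Zb W p.1 p.2

/-- Symmetric capacity `I(W)` (logarithms to base `q = |X|`). -/
def symCap {X Y : Type*} [Fintype X] (W : X → Y → ℝ) : ℝ :=
  ∑ x, ∑' y, (1 / (Fintype.card X : ℝ)) * W x y *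
    Real.logb (Fintype.card X) (W x y / ((1 / (Fintype.card X : ℝ)) * ∑ x', W x' y))

lemma aux_sqrt_le (a b : ℝ) (ha : 0 ≤ a) (hb : 0 ≤ b) : Real.sqrt (a * b) ≤ (a + b) / 2 := by
  rw [Real.sqrt_mul ha]
  nlinarith [Real.sq_sqrt ha, Real.sq_sqrt hb, sq_nonneg (Real.sqrt a - Real.sqrt b),
    Real.sqrt_nonneg a, Real.sqrt_nonneg b]

lemma aux_sq_sub_le (a b : ℝ) (ha : 0 ≤ a) (hb : 0 ≤ b) :
    (a - b) ^ 2 ≤ (2 * (a + b)) * (Real.sqrt a - Real.sqrt b) ^ 2 := by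
  nlinarith [Real.sq_sqrt ha, Real.sq_sqrt hb, sq_nonneg (Real.sqrt a - Real.sqrt b),
    sq_nonneg (Real.sqrt a + Real.sqrt b), Real.sqrt_nonneg a, Real.sqrt_nonneg b,
    mul_nonneg (Real.sqrt_nonneg a) (Real.sqrt_nonneg b)]


lemma aux_row {X : Type*} [Fintype X] (q : ℝ) (hq0 : 0 < q)
    (hqcard : q = (Fintype.card X : ℝ)) (a : X → ℝ) (ha : ∀ x, 0 ≤ a x) :
    ∑ x, (a x * (a x / ((1 / q) * ∑ x', a x')) - a x)
      ≤ ∑ p ∈ (Finset.univ : Finset X).offDiag,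
          (Real.sqrt (a p.1) - Real.sqrt (a p.2)) ^ 2 := by
  have hS0 : 0 ≤ ∑ x', a x' := Finset.sum_nonneg fun x _ => ha x
  rcases eq_or_lt_of_le hS0 with hS | hS
  · have hzero : ∀ x, a x = 0 := by
      intro x
      have h1 : a x ≤ ∑ x', a x' := Finset.single_le_sum (fun x' _ => ha x') (Finset.mem_univ x)
      have h2 := ha x
      linarith [hS]
    have h3 : ∀ x : X, a x * (a x / ((1 / q) * ∑ x', a x')) - a x = 0 := by
      intro x; rw [hzero x]; ring
    rw [Finset.sum_congr rfl fun x _ => h3 x]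
    simp only [Finset.sum_const, smul_zero]
    refine Finset.sum_nonneg fun p _ => sq_nonneg _
  · have hSne : (∑ x', a x') ≠ 0 := ne_of_gt hS
    have hqne : q ≠ 0 := ne_of_gt hq0
    have hgsum : ∑ x, (a x * (a x / ((1 / q) * ∑ x', a x')) - a x)
        = (q * ∑ x, (a x) ^ 2 - (∑ x', a x') ^ 2) / (∑ x', a x') := by
      have h1 : ∀ x : X, a x * (a x / ((1 / q) * ∑ x', a x')) - a x
          = q * (a x) ^ 2 / (∑ x', a x') - a x := by
        intro x
        field_simp
      rw [Finset.sum_congr rfl (fun x _ => h1 x), Finset.sum_sub_distrib,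
        ← Finset.sum_div, ← Finset.mul_sum]
      field_simp
    have hoff : ∑ p ∈ (Finset.univ : Finset X).offDiag, (a p.1 - a p.2) ^ 2
        = 2 * q * (∑ x, (a x) ^ 2) - 2 * (∑ x', a x') ^ 2 := by
      have e0 : ∑ p ∈ (Finset.univ : Finset X).offDiag, (a p.1 - a p.2) ^ 2
          = ∑ p ∈ (Finset.univ : Finset X) ×ˢ (Finset.univ : Finset X),
              (a p.1 - a p.2) ^ 2 := by
        rw [← Finset.diag_union_offDiag (Finset.univ : Finset X),
          Finset.sum_union (Finset.disjoint_diag_offDiag _), Finset.sum_diag]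
        simp
      rw [e0, Finset.sum_product]
      have e1 : ∀ x : X, ∑ x' : X, (a x - a x') ^ 2
          = q * (a x) ^ 2 - 2 * a x * (∑ x', a x') + ∑ x', (a x') ^ 2 := by
        intro x
        have e2 : ∀ x' : X, (a x - a x') ^ 2
            = (a x) ^ 2 - 2 * a x * a x' + (a x') ^ 2 := fun x' => by ring
        rw [Finset.sum_congr rfl (fun x' _ => e2 x'), Finset.sum_add_distrib,
          Finset.sum_sub_distrib, Finset.sum_const, ← Finset.mul_sum]
        simp only [Finset.card_univ, nsmul_eq_mul, ← hqcard]
      calc ∑ x : X, ∑ x' : X, (a (x, x').1 - a (x, x').2) ^ 2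
          = ∑ x : X, (q * (a x) ^ 2 - 2 * a x * (∑ x', a x') + ∑ x', (a x') ^ 2) :=
            Finset.sum_congr rfl fun x _ => e1 x
        _ = q * (∑ x, (a x) ^ 2) - 2 * (∑ x, a x) * (∑ x', a x')
              + q * (∑ x', (a x') ^ 2) := by
            rw [Finset.sum_add_distrib, Finset.sum_sub_distrib, ← Finset.mul_sum,
              Finset.sum_const, Finset.card_univ]
            simp only [nsmul_eq_mul, ← hqcard]
            try rw [← Finset.sum_mul, ← Finset.mul_sum]
            try ring
        _ = 2 * q * (∑ x, (a x) ^ 2) - 2 * (∑ x', a x') ^ 2 := by ring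
    have hpair : ∀ p ∈ (Finset.univ : Finset X).offDiag,
        (a p.1 - a p.2) ^ 2 / (2 * ∑ x', a x')
          ≤ (Real.sqrt (a p.1) - Real.sqrt (a p.2)) ^ 2 := by
      intro p hp
      have hne : p.1 ≠ p.2 := (Finset.mem_offDiag.mp hp).2.2
      have hab : a p.1 + a p.2 ≤ ∑ x', a x' := by
        have h9 := Finset.sum_le_sum_of_subset_of_nonneg
          (show ({p.1, p.2} : Finset X) ⊆ Finset.univ from Finset.subset_univ _)
          (fun i _ _ => ha i)
        rwa [Finset.sum_pair hne] at h9
      rcases eq_or_lt_of_le (add_nonneg (ha p.1) (ha p.2)) with h0 | h0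
      · have ha1 : a p.1 = 0 := by linarith [ha p.1, ha p.2]
        have hb1 : a p.2 = 0 := by linarith [ha p.1, ha p.2]
        simp [ha1, hb1]
      · have key := aux_sq_sub_le (a p.1) (a p.2) (ha p.1) (ha p.2)
        rw [div_le_iff₀ (by positivity)]
        nlinarith [sq_nonneg (Real.sqrt (a p.1) - Real.sqrt (a p.2)), hab]
    calc ∑ x, (a x * (a x / ((1 / q) * ∑ x', a x')) - a x)
        = ∑ p ∈ (Finset.univ : Finset X).offDiag,
            (a p.1 - a p.2) ^ 2 / (2 * ∑ x', a x') := by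
          rw [hgsum, ← Finset.sum_div, hoff, div_eq_div_iff hSne (by positivity)]
          ring
      _ ≤ ∑ p ∈ (Finset.univ : Finset X).offDiag,
            (Real.sqrt (a p.1) - Real.sqrt (a p.2)) ^ 2 := Finset.sum_le_sum hpair

/-- `I(W) ≤ 2(q-1) (log_q e) √(1 - Z(W)²)`. -/
theorem symCap_le_of_bhattacharyya' {X Y : Type*} [Fintype X] [Countable Y]
    (hq : 2 ≤ Fintype.card X) (W : X → Y → ℝ) (hW : IsChannel W) :
    symCap W ≤ 2 * ((Fintype.card X : ℝ) - 1) *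
      Real.logb (Fintype.card X) (Real.exp 1) * Real.sqrt (1 - Zavg W ^ 2) := by
  obtain ⟨hW0, hW1⟩ := hW
  have hq2 : (2 : ℝ) ≤ (Fintype.card X : ℝ) := by exact_mod_cast hq
  set q : ℝ := (Fintype.card X : ℝ) with hqdef
  have hq0 : 0 < q := by linarith
  have hlq : 0 < Real.log q := Real.log_pos (by linarith)
  have hlq2 : Real.log 2 ≤ Real.log q := Real.log_le_log two_pos hq2
  have hql1 : 1 ≤ q * Real.log q := by nlinarith [Real.log_two_gt_d9]
  have hSummW : ∀ x, Summable (W x) := fun x => (hW1 x).summable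
  have hS0 : ∀ y, 0 ≤ ∑ x', W x' y := fun y =>
    Finset.sum_nonneg fun x _ => hW0 x y
  have hWleS : ∀ x y, W x y ≤ ∑ x', W x' y := fun x y =>
    Finset.single_le_sum (fun x' _ => hW0 x' y) (Finset.mem_univ x)
  have hSummS : Summable (fun y => ∑ x', W x' y) := summable_sum fun i _ => hSummW i
  -- sqrt summability
  have hSummSqrt : ∀ x x', Summable (fun y => Real.sqrt (W x y * W x' y)) := by
    intro x x'
    refine Summable.of_nonneg_of_le (fun y => Real.sqrt_nonneg _)
      (fun y => aux_sqrt_le _ _ (hW0 x y) (hW0 x' y)) ?_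
    exact ((hSummW x).add (hSummW x')).div_const 2
  -- Zb facts
  have hZb0 : ∀ x x', 0 ≤ Zb W x x' := fun x x' =>
    tsum_nonneg fun y => Real.sqrt_nonneg _
  have hZb1 : ∀ x x', Zb W x x' ≤ 1 := by
    intro x x'
    have h1 : Zb W x x' ≤ ∑' y, (W x y + W x' y) / 2 :=
      Summable.tsum_le_tsum (fun y => aux_sqrt_le _ _ (hW0 x y) (hW0 x' y)) (hSummSqrt x x')
        (((hSummW x).add (hSummW x')).div_const 2)
    have h2 : ∑' y, (W x y + W x' y) / 2 = 1 := by
      rw [tsum_div_const, Summable.tsum_add (hSummW x) (hSummW x'), (hW1 x).tsum_eq, (hW1 x').tsum_eq]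
      norm_num
    linarith
  -- Zavg facts
  have hcard : ((Finset.univ : Finset X).offDiag.card : ℝ) = q * (q - 1) := by
    rw [Finset.offDiag_card]
    simp only [Finset.card_univ]
    rw [Nat.cast_sub (Nat.le_mul_of_pos_left _ (by omega))]
    push_cast [← hqdef]
    ring
  have hqq1 : q * (q - 1) ≠ 0 := by nlinarith
  have hZsum : ∑ p ∈ (Finset.univ : Finset X).offDiag, Zb W p.1 p.2 = q * (q - 1) * Zavg W := by
    rw [Zavg, ← hqdef, one_div, ← mul_assoc, mul_inv_cancel₀ hqq1, one_mul]
  have hZavg0 : 0 ≤ Zavg W := by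
    rw [Zavg]
    refine mul_nonneg (div_nonneg zero_le_one (by nlinarith)) (Finset.sum_nonneg fun p _ => hZb0 _ _)
  have hZavg1 : Zavg W ≤ 1 := by
    have h1 : ∑ p ∈ (Finset.univ : Finset X).offDiag, Zb W p.1 p.2 ≤
        ((Finset.univ : Finset X).offDiag.card : ℝ) * 1 := by
      have := Finset.sum_le_card_nsmul (Finset.univ : Finset X).offDiag
        (fun p => Zb W p.1 p.2) 1 (fun p _ => hZb1 _ _)
      simpa [nsmul_eq_mul] using this
    rw [hcard, hZsum] at h1
    nlinarith [mul_pos (show (0:ℝ) < q by linarith) (show (0:ℝ) < q - 1 by linarith)]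
  -- the comparison function g
  set g : X → Y → ℝ := fun x y =>
    W x y * (W x y / ((1 / q) * ∑ x', W x' y)) - W x y with hgdef
  -- ratio bound
  have hratio : ∀ x y, W x y / ((1 / q) * ∑ x', W x' y) ≤ q := by
    intro x y
    rcases eq_or_lt_of_le (hS0 y) with h | h
    · simp [← h, hq0.le]
    · rw [div_le_iff₀ (mul_pos (by positivity) h)]
      calc W x y ≤ ∑ x', W x' y := hWleS x y
        _ = q * ((1/q) * ∑ x', W x' y) := by field_simp
  have hratio0 : ∀ x y, 0 ≤ W x y / ((1 / q) * ∑ x', W x' y) := by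
    intro x y
    exact div_nonneg (hW0 x y) (mul_nonneg (by positivity) (hS0 y))
  have hSummg : ∀ x, Summable (g x) := by
    intro x
    refine Summable.sub ?_ (hSummW x)
    refine Summable.of_nonneg_of_le (fun y => mul_nonneg (hW0 x y) (hratio0 x y))
      (fun y => ?_) ((hSummW x).mul_left q)
    calc W x y * (W x y / ((1 / q) * ∑ x', W x' y)) ≤ W x y * q :=
          mul_le_mul_of_nonneg_left (hratio x y) (hW0 x y)
      _ = q * W x y := mul_comm _ _
  -- termwise bound of the integrand
  have hterm : ∀ x y, (1 / q) * W x y *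
      Real.logb q (W x y / ((1 / q) * ∑ x', W x' y)) ≤ (1 / (q * Real.log q)) * g x y := by
    intro x y
    rcases (hW0 x y).eq_or_lt with h0 | h0
    · simp [hgdef, ← h0]
    · have hSy : 0 < ∑ x', W x' y := lt_of_lt_of_le h0 (hWleS x y)
      have hd : 0 < (1 / q) * ∑ x', W x' y := mul_pos (by positivity) hSy
      have hr : 0 < W x y / ((1 / q) * ∑ x', W x' y) := div_pos h0 hd
      have hlog := Real.log_le_sub_one_of_pos hr
      have h2 : W x y * Real.log (W x y / ((1 / q) * ∑ x', W x' y)) ≤ g x y := by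
        have h3 := mul_le_mul_of_nonneg_left hlog h0.le
        have h4 : W x y * (W x y / ((1 / q) * ∑ x', W x' y) - 1) = g x y := by
          simp only [hgdef]; ring
        linarith
      calc (1 / q) * W x y * Real.logb q (W x y / ((1 / q) * ∑ x', W x' y))
          = (W x y * Real.log (W x y / ((1 / q) * ∑ x', W x' y))) / (q * Real.log q) := by
            rw [Real.logb]; ring
        _ ≤ g x y / (q * Real.log q) := by
            exact (div_le_div_iff_of_pos_right (by positivity)).mpr h2
        _ = (1 / (q * Real.log q)) * g x y := by ring
  -- summability of the integrand
  have hSummTerm : ∀ x, Summable (fun y => (1 / q) * W x y *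
      Real.logb q (W x y / ((1 / q) * ∑ x', W x' y))) := by
    intro x
    refine Summable.of_abs (Summable.of_nonneg_of_le (fun y => abs_nonneg _) (fun y => ?_)
      (((hSummW x).mul_left 2).add hSummS))
    rcases (hW0 x y).eq_or_lt with h0 | h0
    · rw [← h0]
      simpa using hS0 y
    · have hSy : 0 < ∑ x', W x' y := lt_of_lt_of_le h0 (hWleS x y)
      have hd : 0 < (1 / q) * ∑ x', W x' y := mul_pos (by positivity) hSy
      have hr : 0 < W x y / ((1 / q) * ∑ x', W x' y) := div_pos h0 hd
      have hrq : W x y / ((1 / q) * ∑ x', W x' y) ≤ q := hratio x y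
      rw [abs_le]
      constructor
      · have h5 := Real.log_le_sub_one_of_pos (div_pos hd h0)
        rw [show ((1 / q) * ∑ x', W x' y) / W x y
            = (W x y / ((1 / q) * ∑ x', W x' y))⁻¹ from (inv_div _ _).symm,
          Real.log_inv] at h5
        have hlow : 1 - ((1 / q) * ∑ x', W x' y) / W x y ≤
            Real.log (W x y / ((1 / q) * ∑ x', W x' y)) := by
          rw [inv_div] at h5
          linarith
        have h7 := mul_le_mul_of_nonneg_left hlow h0.le
        rw [mul_sub, mul_one, ← mul_div_assoc, mul_comm (W x y), mul_div_assoc,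
          div_self (ne_of_gt h0), mul_one] at h7
        have h3 : W x y - (1 / q) * ∑ x', W x' y ≤
            W x y * Real.log (W x y / ((1 / q) * ∑ x', W x' y)) := h7
        have h4 : -(∑ x', W x' y) ≤ W x y - (1 / q) * ∑ x', W x' y := by
          have hq1 : 1 / q ≤ 1 := by
            rw [div_le_one hq0]; linarith
          have h7' := mul_le_mul_of_nonneg_right hq1 (hS0 y)
          rw [one_mul] at h7'
          linarith [hW0 x y]
        have h5 : -(∑ x', W x' y) ≤
            (W x y * Real.log (W x y / ((1 / q) * ∑ x', W x' y))) / (q * Real.log q) := by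
          rw [le_div_iff₀ (by positivity)]
          nlinarith [mul_nonneg (hS0 y) (show (0:ℝ) ≤ q * Real.log q - 1 by linarith)]
        calc -(2 * W x y + ∑ x', W x' y) ≤ -(∑ x', W x' y) := by linarith [hW0 x y]
          _ ≤ (W x y * Real.log (W x y / ((1 / q) * ∑ x', W x' y))) / (q * Real.log q) := h5
          _ = 1 / q * W x y * Real.logb q (W x y / ((1 / q) * ∑ x', W x' y)) := by
              rw [Real.logb]; ring
      · have hup : Real.log (W x y / ((1 / q) * ∑ x', W x' y)) ≤ Real.log q :=
          Real.log_le_log hr hrq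
        calc 1 / q * W x y * Real.logb q (W x y / ((1 / q) * ∑ x', W x' y))
            = (W x y * Real.log (W x y / ((1 / q) * ∑ x', W x' y))) / (q * Real.log q) := by
              rw [Real.logb]; ring
          _ ≤ (W x y * Real.log q) / (q * Real.log q) :=
              (div_le_div_iff_of_pos_right (by positivity)).mpr (mul_le_mul_of_nonneg_left hup h0.le)
          _ = W x y / q := mul_div_mul_right _ _ (ne_of_gt hlq)
          _ ≤ 2 * W x y + ∑ x', W x' y := by
              have h8 := div_le_self h0.le (show (1:ℝ) ≤ q by linarith)
              linarith [hS0 y]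
  -- pointwise-in-y bound by pairwise sqrt differences
  have hy : ∀ y, ∑ x, g x y ≤ ∑ p ∈ (Finset.univ : Finset X).offDiag,
      (Real.sqrt (W p.1 y) - Real.sqrt (W p.2 y)) ^ 2 := by
    intro y
    exact aux_row q hq0 hqdef (fun x => W x y) (fun x => hW0 x y)
  -- summability of R
  have hSummR : ∀ p : X × X, Summable (fun y => (Real.sqrt (W p.1 y) - Real.sqrt (W p.2 y)) ^ 2) := by
    intro p
    have : ∀ y, (Real.sqrt (W p.1 y) - Real.sqrt (W p.2 y)) ^ 2
        = (W p.1 y + W p.2 y) - 2 * Real.sqrt (W p.1 y * W p.2 y) := by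
      intro y
      rw [sub_sq, Real.sq_sqrt (hW0 p.1 y), Real.sq_sqrt (hW0 p.2 y),
        Real.sqrt_mul (hW0 p.1 y)]
      ring
    rw [show (fun y => (Real.sqrt (W p.1 y) - Real.sqrt (W p.2 y)) ^ 2)
      = fun y => (W p.1 y + W p.2 y) - 2 * Real.sqrt (W p.1 y * W p.2 y) from funext this]
    exact ((hSummW p.1).add (hSummW p.2)).sub ((hSummSqrt p.1 p.2).mul_left 2)
  have htsumR : ∀ p : X × X, ∑' y, (Real.sqrt (W p.1 y) - Real.sqrt (W p.2 y)) ^ 2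
      = 2 - 2 * Zb W p.1 p.2 := by
    intro p
    have h1 : ∀ y, (Real.sqrt (W p.1 y) - Real.sqrt (W p.2 y)) ^ 2
        = (W p.1 y + W p.2 y) - 2 * Real.sqrt (W p.1 y * W p.2 y) := by
      intro y
      rw [sub_sq, Real.sq_sqrt (hW0 p.1 y), Real.sq_sqrt (hW0 p.2 y),
        Real.sqrt_mul (hW0 p.1 y)]
      ring
    rw [tsum_congr h1, Summable.tsum_sub ((hSummW p.1).add (hSummW p.2)) ((hSummSqrt p.1 p.2).mul_left 2),
      Summable.tsum_add (hSummW p.1) (hSummW p.2), (hW1 p.1).tsum_eq, (hW1 p.2).tsum_eq,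
      tsum_mul_left, Zb]
    norm_num
  -- main chain
  have hmain : symCap W ≤ (1 / (q * Real.log q)) * (2 * (q * (q - 1)) * (1 - Zavg W)) := by
    have hsymCap : symCap W = ∑ x, ∑' y, (1 / q) * W x y *
        Real.logb q (W x y / ((1 / q) * ∑ x', W x' y)) := rfl
    have step1 : symCap W ≤ ∑ x, ∑' y, (1 / (q * Real.log q)) * g x y := by
      rw [hsymCap]
      exact Finset.sum_le_sum fun x _ =>
        Summable.tsum_le_tsum (fun y => hterm x y) (hSummTerm x) ((hSummg x).mul_left _)
    have step2 : ∑ x, ∑' y, (1 / (q * Real.log q)) * g x y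
        = (1 / (q * Real.log q)) * ∑' y, ∑ x, g x y := by
      calc ∑ x, ∑' y, (1 / (q * Real.log q)) * g x y
          = ∑ x, (1 / (q * Real.log q)) * ∑' y, g x y := by
            exact Finset.sum_congr rfl fun x _ => tsum_mul_left
        _ = (1 / (q * Real.log q)) * ∑ x, ∑' y, g x y := by rw [Finset.mul_sum]
        _ = (1 / (q * Real.log q)) * ∑' y, ∑ x, g x y := by
            rw [Summable.tsum_finsetSum (fun x _ => hSummg x)]
    have step3 : ∑' y, ∑ x, g x y ≤ ∑' y, ∑ p ∈ (Finset.univ : Finset X).offDiag,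
        (Real.sqrt (W p.1 y) - Real.sqrt (W p.2 y)) ^ 2 :=
      Summable.tsum_le_tsum hy (summable_sum fun x _ => hSummg x) (summable_sum fun p _ => hSummR p)
    have step4 : ∑' y, ∑ p ∈ (Finset.univ : Finset X).offDiag,
        (Real.sqrt (W p.1 y) - Real.sqrt (W p.2 y)) ^ 2 = 2 * (q * (q - 1)) * (1 - Zavg W) := by
      rw [Summable.tsum_finsetSum (fun p _ => hSummR p), Finset.sum_congr rfl (fun p _ => htsumR p),
        Finset.sum_sub_distrib, Finset.sum_const, ← Finset.mul_sum, hZsum, nsmul_eq_mul, hcard]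
      ring
    have hc0 : 0 ≤ 1 / (q * Real.log q) := by positivity
    calc symCap W ≤ (1 / (q * Real.log q)) * ∑' y, ∑ x, g x y := by rw [← step2]; exact step1
      _ ≤ (1 / (q * Real.log q)) * (2 * (q * (q - 1)) * (1 - Zavg W)) := by
          rw [← step4]
          exact mul_le_mul_of_nonneg_left step3 hc0
  have hfinal : (1 / (q * Real.log q)) * (2 * (q * (q - 1)) * (1 - Zavg W)) ≤
      2 * (q - 1) * Real.logb q (Real.exp 1) * Real.sqrt (1 - Zavg W ^ 2) := by
    have hlogb : Real.logb q (Real.exp 1) = 1 / Real.log q := by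
      rw [Real.logb, Real.log_exp]
    have hsq : 1 - Zavg W ≤ Real.sqrt (1 - Zavg W ^ 2) := by
      refine (Real.le_sqrt (by linarith) (by nlinarith)).mpr (by nlinarith)
    have hc1 : 0 ≤ 2 * (q - 1) / Real.log q := by
      apply div_nonneg (by linarith) hlq.le
    calc (1 / (q * Real.log q)) * (2 * (q * (q - 1)) * (1 - Zavg W))
        = (2 * (q - 1) / Real.log q) * (1 - Zavg W) := by
          field_simp
      _ ≤ (2 * (q - 1) / Real.log q) * Real.sqrt (1 - Zavg W ^ 2) :=
          mul_le_mul_of_nonneg_left hsq hc1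
      _ = 2 * (q - 1) * Real.logb q (Real.exp 1) * Real.sqrt (1 - Zavg W ^ 2) := by
          rw [hlogb]; ring
  linarith

end Polar
end
end

section
/- Let W be a q-ary DMC, let σ and τ be permutations of 𝒳, and define the channel W'(y₁,y₂|x) := W(y₁|σ(x))·W(y₂|τ(x)) with output alphabet 𝒴². Then I(W') − I(W) ≥ −log_q[ 1 − (1/q²) Σ_{z∈𝒳} Σ_{x∈𝒳} Z_{z,x}(W)² · (1 − Z_{τ(σ⁻¹(z)),τ(σ⁻¹(x))}(W)) ]. -/
open MeasureTheory Filter Real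
open scoped Classical

noncomputable section

namespace Polar

/-- Flattening a finite-by-infinite double sum. -/
lemma hasSum_prod_fintype {X κ : Type*} [Fintype X] {f : X → κ → ℝ} {v : X → ℝ}
    (h : ∀ x, HasSum (f x) (v x)) :
    HasSum (fun p : X × κ => f p.1 p.2) (∑ x, v x) := by
  have key : ∀ x : X, HasSum (fun p : X × κ => if p.1 = x then f x p.2 else 0) (v x) := by
    intro x
    have hinj : Function.Injective (Prod.mk x : κ → X × κ) := fun k k' hk => by
      simpa using hk
    have hsupp : ∀ p : X × κ, p ∉ Set.range (Prod.mk x : κ → X × κ) →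
        (if p.1 = x then f x p.2 else 0) = 0 := by
      rintro ⟨x', k⟩ hp
      have : x' ≠ x := by
        intro hx; exact hp ⟨k, by simp [hx]⟩
      simp [this]
    rw [← Function.Injective.hasSum_iff hinj hsupp]
    have : ((fun p : X × κ => if p.1 = x then f x p.2 else 0) ∘ Prod.mk x) = f x := by
      funext k; simp
    rw [this]; exact h x
  have := hasSum_sum (s := (Finset.univ : Finset X))
    (f := fun x (p : X × κ) => if p.1 = x then f x p.2 else 0) (a := v)
    (fun x _ => key x)
  convert this using 1
  funext p
  simp
lemma summable_prod_fintype {X κ : Type*} [Fintype X] {f : X → κ → ℝ}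
    (h : ∀ x, Summable (f x)) : Summable (fun p : X × κ => f p.1 p.2) :=
  (hasSum_prod_fintype (fun x => (h x).hasSum)).summable

lemma tsum_prod_fintype {X κ : Type*} [Fintype X] {f : X → κ → ℝ}
    (h : ∀ x, Summable (f x)) :
    ∑' p : X × κ, f p.1 p.2 = ∑ x, ∑' k, f x k :=
  (hasSum_prod_fintype (fun x => (h x).hasSum)).tsum_eq

lemma sqrt_mul_le_add_half {x y : ℝ} (hx : 0 ≤ x) (hy : 0 ≤ y) :
    Real.sqrt (x * y) ≤ (x + y) / 2 := by
  rw [Real.sqrt_mul hx]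
  nlinarith [Real.sq_sqrt hx, Real.sq_sqrt hy, sq_nonneg (Real.sqrt x - Real.sqrt y),
    Real.sqrt_nonneg x, Real.sqrt_nonneg y]

lemma abs_mul_log_div_le {a S : ℝ} (ha : 0 ≤ a) (haS : a ≤ S) :
    |a * Real.log (a / S)| ≤ S := by
  rcases eq_or_lt_of_le ha with h0 | h0
  · simp [← h0]; linarith
  · have hS : 0 < S := lt_of_lt_of_le h0 haS
    have hlog : Real.log (a / S) ≤ 0 := by
      apply Real.log_nonpos (by positivity) (by
        rw [div_le_one hS]; exact haS)
    have h1 : a * Real.log (a / S) ≤ 0 := mul_nonpos_of_nonneg_of_nonpos ha hlog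
    rw [abs_of_nonpos h1]
    have h2 : Real.log (S / a) ≤ S / a - 1 := Real.log_le_sub_one_of_pos (by positivity)
    have h3 : Real.log (a / S) = - Real.log (S / a) := by
      rw [← Real.log_inv]; congr 1; field_simp
    have h4 : a * Real.log (S / a) ≤ a * (S / a - 1) := by
      apply mul_le_mul_of_nonneg_left h2 ha
    have h5 : a * (S / a - 1) = S - a := by field_simp
    nlinarith
/-- Cauchy–Schwarz for tsums of nonnegative functions. -/
lemma tsum_mul_sq_le {ι : Type*} {f g : ι → ℝ} (hf : ∀ i, 0 ≤ f i) (hg : ∀ i, 0 ≤ g i)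
    (h2f : Summable (fun i => f i ^ 2)) (h2g : Summable (fun i => g i ^ 2)) :
    (∑' i, f i * g i) ^ 2 ≤ (∑' i, f i ^ 2) * (∑' i, g i ^ 2) := by
  have hfg : Summable (fun i => f i * g i) := by
    apply Summable.of_nonneg_of_le (fun i => mul_nonneg (hf i) (hg i))
      (fun i => ?_) ((h2f.add h2g).div_const 2)
    nlinarith [sq_nonneg (f i - g i)]
  set A := ∑' i, f i ^ 2 with hA
  set B := ∑' i, g i ^ 2 with hB
  have hA0 : 0 ≤ A := tsum_nonneg (fun i => sq_nonneg _)
  have hB0 : 0 ≤ B := tsum_nonneg (fun i => sq_nonneg _)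
  have key : ∑' i, f i * g i ≤ Real.sqrt (A * B) := by
    apply Summable.tsum_le_of_sum_le hfg
    intro s
    have h1 : (∑ i ∈ s, f i * g i) ^ 2 ≤ (∑ i ∈ s, f i ^ 2) * (∑ i ∈ s, g i ^ 2) :=
      Finset.sum_mul_sq_le_sq_mul_sq s f g
    have h2 : (∑ i ∈ s, f i ^ 2) * (∑ i ∈ s, g i ^ 2) ≤ A * B := by
      apply mul_le_mul (Summable.sum_le_tsum s (fun i _ => sq_nonneg _) h2f)
        (Summable.sum_le_tsum s (fun i _ => sq_nonneg _) h2g)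
        (Finset.sum_nonneg (fun i _ => sq_nonneg _)) hA0
    have h3 : 0 ≤ ∑ i ∈ s, f i * g i :=
      Finset.sum_nonneg (fun i _ => mul_nonneg (hf i) (hg i))
    rw [Real.le_sqrt h3 (mul_nonneg hA0 hB0)]
    exact le_trans h1 h2
  calc (∑' i, f i * g i) ^ 2 ≤ Real.sqrt (A * B) ^ 2 :=
        pow_le_pow_left₀ (tsum_nonneg (fun i => mul_nonneg (hf i) (hg i))) key 2
    _ = A * B := Real.sq_sqrt (mul_nonneg hA0 hB0)

/-- Gibbs' inequality / Jensen for `log` over a countable probability distribution. -/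
lemma tsum_mul_log_le {ι : Type*} {p t : ι → ℝ} (hp0 : ∀ i, 0 ≤ p i) (hp1 : HasSum p 1)
    (ht0 : ∀ i, 0 ≤ t i) (hpt : ∀ i, p i ≠ 0 → 0 < t i)
    (hs1 : Summable (fun i => p i * t i)) (hs2 : Summable (fun i => p i * Real.log (t i))) :
    ∑' i, p i * Real.log (t i) ≤ Real.log (∑' i, p i * t i) := by
  set c := ∑' i, p i * t i with hc
  obtain ⟨i0, hi0⟩ : ∃ i, p i ≠ 0 := by
    by_contra h
    push_neg at h
    have : HasSum p 0 := by
      have : p = fun _ => (0:ℝ) := funext h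
      rw [this]; exact hasSum_zero
    exact one_ne_zero (hp1.unique this)
  have hc0 : 0 < c := by
    have h1 : p i0 * t i0 ≤ c :=
      Summable.le_tsum hs1 i0 (fun j _ => mul_nonneg (hp0 j) (ht0 j))
    have h2 : 0 < p i0 * t i0 :=
      mul_pos (lt_of_le_of_ne (hp0 i0) (Ne.symm hi0)) (hpt i0 hi0)
    linarith
  have hpointwise : ∀ i, p i * Real.log (t i) ≤
      p i * t i / c - p i + p i * Real.log c := by
    intro i
    rcases eq_or_ne (p i) 0 with h | h
    · simp [h]
    · have hti : 0 < t i := hpt i h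
      have hlog : Real.log (t i) ≤ Real.log c + (t i / c - 1) := by
        have := Real.log_le_sub_one_of_pos (show 0 < t i / c by positivity)
        have hld : Real.log (t i / c) = Real.log (t i) - Real.log c :=
          Real.log_div (ne_of_gt hti) (ne_of_gt hc0)
        linarith
      have hpi : 0 < p i := lt_of_le_of_ne (hp0 i) (Ne.symm h)
      have := mul_le_mul_of_nonneg_left hlog (le_of_lt hpi)
      calc p i * Real.log (t i) ≤ p i * (Real.log c + (t i / c - 1)) := this
        _ = p i * t i / c - p i + p i * Real.log c := by ring
  have hsum_rhs : Summable (fun i => p i * t i / c - p i + p i * Real.log c) :=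
    ((hs1.div_const c).sub hp1.summable).add (hp1.summable.mul_right _)
  have h1 : ∑' i, p i * Real.log (t i) ≤ ∑' i, (p i * t i / c - p i + p i * Real.log c) :=
    Summable.tsum_le_tsum hpointwise hs2 hsum_rhs
  have h2 : ∑' i, (p i * t i / c - p i + p i * Real.log c) = Real.log c := by
    have e1 : HasSum (fun i => p i * t i / c) 1 := by
      have := hs1.hasSum.div_const c
      rwa [div_self (ne_of_gt hc0)] at this
    have e2 : HasSum (fun i => p i * Real.log c) (Real.log c) := by
      have := hp1.mul_right (Real.log c)
      simpa using this
    have := (e1.sub hp1).add e2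
    have heq := this.tsum_eq
    simpa using heq
  linarith [h1, h2.le.trans (le_refl _), h2 ▸ h1]

/-- Summability of the mutual-information integrand. -/
lemma integrand_summable {κ : Type*} {w S : κ → ℝ} {c : ℝ} (hc : 1 < c)
    (hw0 : ∀ k, 0 ≤ w k) (hwS : ∀ k, w k ≤ S k) (hw : Summable w) (hS : Summable S) :
    Summable (fun k => 1 / c * w k * Real.logb c (w k / (1 / c * S k))) := by
  have hlc : 0 < Real.log c := Real.log_pos hc
  have key : ∀ k, 1 / c * w k * Real.logb c (w k / (1 / c * S k)) =
      (1 / c / Real.log c) * (w k * Real.log (w k / S k)) + 1 / c * w k := by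
    intro k
    rcases eq_or_lt_of_le (hw0 k) with h0 | h0
    · simp [← h0]
    · have hSk : 0 < S k := lt_of_lt_of_le h0 (hwS k)
      have hc0 : (0:ℝ) < c := lt_trans one_pos hc
      have harg : w k / (1 / c * S k) = w k / S k * c := by field_simp
      rw [Real.logb, harg, Real.log_mul (by positivity) (by positivity)]
      field_simp
  rw [show (fun k => 1 / c * w k * Real.logb c (w k / (1 / c * S k))) =
      (fun k => (1 / c / Real.log c) * (w k * Real.log (w k / S k)) + 1 / c * w k) from
      funext key]
  apply Summable.add _ (hw.mul_left _)
  apply Summable.mul_left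
  apply Summable.of_abs
  apply Summable.of_nonneg_of_le (fun k => abs_nonneg _) (fun k => abs_mul_log_div_le (hw0 k) (hwS k)) hS


section Channels
variable {X Y : Type*} [Fintype X]

/-- Column sum of a channel. -/
def S1 (a : X → Y → ℝ) (y : Y) : ℝ := ∑ x, a x y

/-- `T`-parameter. -/
def Tq (a : X → Y → ℝ) (x x' : X) : ℝ := ∑' y, a x y * a x' y / S1 a y

variable {a b : X → Y → ℝ}

lemma S1_nonneg (ha0 : ∀ x y, 0 ≤ a x y) (y : Y) : 0 ≤ S1 a y :=
  Finset.sum_nonneg (fun x _ => ha0 x y)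

lemma le_S1 (ha0 : ∀ x y, 0 ≤ a x y) (x : X) (y : Y) : a x y ≤ S1 a y :=
  Finset.single_le_sum (fun i _ => ha0 i y) (Finset.mem_univ x)

lemma eq_zero_of_S1_eq_zero (ha0 : ∀ x y, 0 ≤ a x y) {y : Y} (h : S1 a y = 0) (x : X) :
    a x y = 0 :=
  le_antisymm (h ▸ le_S1 ha0 x y) (ha0 x y)

lemma hasSum_S1 (ha1 : ∀ x, HasSum (a x) 1) :
    HasSum (S1 a) (Fintype.card X : ℝ) := by
  have := hasSum_sum (s := (Finset.univ : Finset X)) (f := a) (a := fun _ => (1:ℝ))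
    (fun x _ => ha1 x)
  show HasSum (fun y => ∑ x, a x y) _
  simpa [S1, Finset.card_univ] using this

lemma prod_channel_nonneg (ha0 : ∀ x y, 0 ≤ a x y) (hb0 : ∀ x y, 0 ≤ b x y) :
    ∀ x (p : Y × Y), 0 ≤ a x p.1 * b x p.2 :=
  fun x p => mul_nonneg (ha0 x p.1) (hb0 x p.2)

lemma prod_channel_hasSum (ha0 : ∀ x y, 0 ≤ a x y) (ha1 : ∀ x, HasSum (a x) 1)
    (hb0 : ∀ x y, 0 ≤ b x y) (hb1 : ∀ x, HasSum (b x) 1) :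
    ∀ x, HasSum (fun p : Y × Y => a x p.1 * b x p.2) 1 := by
  intro x
  have hs : Summable (fun p : Y × Y => a x p.1 * b x p.2) :=
    (ha1 x).summable.mul_of_nonneg (hb1 x).summable (fun y => ha0 x y) (fun y => hb0 x y)
  simpa using (ha1 x).mul (hb1 x) hs

lemma Zb_nonneg (x x' : X) : 0 ≤ Zb a x x' :=
  tsum_nonneg (fun y => Real.sqrt_nonneg _)

lemma Zb_summable (ha0 : ∀ x y, 0 ≤ a x y) (ha1 : ∀ x, HasSum (a x) 1) (x x' : X) :
    Summable (fun y => Real.sqrt (a x y * a x' y)) :=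
  Summable.of_nonneg_of_le (fun y => Real.sqrt_nonneg _)
    (fun y => sqrt_mul_le_add_half (ha0 x y) (ha0 x' y))
    (((ha1 x).summable.add (ha1 x').summable).div_const 2)

lemma Zb_le_one (ha0 : ∀ x y, 0 ≤ a x y) (ha1 : ∀ x, HasSum (a x) 1) (x x' : X) :
    Zb a x x' ≤ 1 := by
  have h2 : HasSum (fun y => (a x y + a x' y) / 2) 1 := by
    simpa using ((ha1 x).add (ha1 x')).div_const 2
  calc Zb a x x' ≤ ∑' y, (a x y + a x' y) / 2 :=
        Summable.tsum_le_tsum (fun y => sqrt_mul_le_add_half (ha0 x y) (ha0 x' y))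
          (Zb_summable ha0 ha1 x x') h2.summable
    _ = 1 := h2.tsum_eq

lemma Tq_summand_nonneg (ha0 : ∀ x y, 0 ≤ a x y) (x x' : X) (y : Y) :
    0 ≤ a x y * a x' y / S1 a y := by
  exact div_nonneg (mul_nonneg (ha0 x y) (ha0 x' y)) (S1_nonneg ha0 y)

lemma Tq_summand_le (ha0 : ∀ x y, 0 ≤ a x y) (x x' : X) (y : Y) :
    a x y * a x' y / S1 a y ≤ a x y := by
  rcases eq_or_lt_of_le (S1_nonneg ha0 y) with h0 | h0
  · rw [eq_zero_of_S1_eq_zero ha0 h0.symm x]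
    simp
  · calc a x y * a x' y / S1 a y = a x y * (a x' y / S1 a y) := by ring
      _ ≤ a x y * 1 := by
          apply mul_le_mul_of_nonneg_left _ (ha0 x y)
          rw [div_le_one h0]
          exact le_S1 ha0 x' y
      _ = a x y := mul_one _

lemma Tq_summable (ha0 : ∀ x y, 0 ≤ a x y) (ha1 : ∀ x, HasSum (a x) 1) (x x' : X) :
    Summable (fun y => a x y * a x' y / S1 a y) :=
  Summable.of_nonneg_of_le (Tq_summand_nonneg ha0 x x') (Tq_summand_le ha0 x x')
    (ha1 x).summable

lemma Tq_nonneg (ha0 : ∀ x y, 0 ≤ a x y) (x x' : X) : 0 ≤ Tq a x x' :=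
  tsum_nonneg (Tq_summand_nonneg ha0 x x')

lemma sum_Tq (ha0 : ∀ x y, 0 ≤ a x y) (ha1 : ∀ x, HasSum (a x) 1) :
    ∑ x, ∑ x', Tq a x x' = (Fintype.card X : ℝ) := by
  have hsumm : ∀ x x', Summable (fun y => a x y * a x' y / S1 a y) := Tq_summable ha0 ha1
  have h1 : ∀ x, ∑ x', Tq a x x' = ∑' y, ∑ x', a x y * a x' y / S1 a y :=
    fun x => (Summable.tsum_finsetSum (fun x' _ => hsumm x x')).symm
  have h2 : ∑ x, ∑' y, ∑ x', a x y * a x' y / S1 a y =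
      ∑' y, ∑ x, ∑ x', a x y * a x' y / S1 a y :=
    (Summable.tsum_finsetSum (fun x _ => summable_sum (fun x' _ => hsumm x x'))).symm
  have h3 : ∀ y, ∑ x, ∑ x', a x y * a x' y / S1 a y = S1 a y := by
    intro y
    have hx : ∀ x : X, ∑ x', a x y * a x' y / S1 a y = a x y * S1 a y / S1 a y := by
      intro x
      rw [← Finset.sum_div, ← Finset.mul_sum]
      rfl
    rw [Finset.sum_congr rfl (fun x _ => hx x)]
    rcases eq_or_ne (S1 a y) 0 with h0 | h0
    · rw [h0]
      simp [fun x => eq_zero_of_S1_eq_zero ha0 h0 x]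
    · rw [Finset.sum_congr rfl (fun x _ => mul_div_cancel_right₀ (a x y) h0)]
      rfl
  rw [Finset.sum_congr rfl (fun x _ => h1 x), h2, tsum_congr h3,
    (hasSum_S1 ha1).tsum_eq]

lemma Zb_sq_le_Tq (ha0 : ∀ x y, 0 ≤ a x y) (ha1 : ∀ x, HasSum (a x) 1) (x x' : X) :
    Zb a x x' ^ 2 ≤ (Fintype.card X : ℝ) * Tq a x x' := by
  set f : Y → ℝ := fun y => Real.sqrt (a x y * a x' y / S1 a y) with hf
  set g : Y → ℝ := fun y => Real.sqrt (S1 a y) with hg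
  have hfg : ∀ y, f y * g y = Real.sqrt (a x y * a x' y) := by
    intro y
    rw [hf, hg]
    rw [← Real.sqrt_mul (Tq_summand_nonneg ha0 x x' y)]
    rcases eq_or_ne (S1 a y) 0 with h0 | h0
    · rw [h0, eq_zero_of_S1_eq_zero ha0 h0 x]
      simp
    · rw [div_mul_cancel₀ _ h0]
  have hf2 : ∀ y, f y ^ 2 = a x y * a x' y / S1 a y :=
    fun y => Real.sq_sqrt (Tq_summand_nonneg ha0 x x' y)
  have hg2 : ∀ y, g y ^ 2 = S1 a y :=
    fun y => Real.sq_sqrt (S1_nonneg ha0 y)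
  have key := tsum_mul_sq_le (f := f) (g := g) (fun y => Real.sqrt_nonneg _)
    (fun y => Real.sqrt_nonneg _)
    (by rw [show (fun y => f y ^ 2) = fun y => a x y * a x' y / S1 a y from funext hf2]
        exact Tq_summable ha0 ha1 x x')
    (by rw [show (fun y => g y ^ 2) = S1 a from funext hg2]
        exact (hasSum_S1 ha1).summable)
  rw [tsum_congr hfg, tsum_congr hf2, tsum_congr hg2] at key
  calc Zb a x x' ^ 2 ≤ Tq a x x' * ∑' y, S1 a y := key
    _ = (Fintype.card X : ℝ) * Tq a x x' := by
        rw [(hasSum_S1 ha1).tsum_eq]; ring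

end Channels

set_option maxHeartbeats 2000000 in
lemma main_ineq {X Y : Type*} [Fintype X] (hq : 2 ≤ Fintype.card X)
    (a b : X → Y → ℝ) (ha0 : ∀ x y, 0 ≤ a x y) (ha1 : ∀ x, HasSum (a x) 1)
    (hb0 : ∀ x y, 0 ≤ b x y) (hb1 : ∀ x, HasSum (b x) 1) :
    (∑ x, ∑' p : Y × Y, 1 / (Fintype.card X : ℝ) * (a x p.1 * b x p.2) *
        Real.logb (Fintype.card X) ((a x p.1 * b x p.2) /
          (1 / (Fintype.card X : ℝ) * S1 (fun x' (p' : Y × Y) => a x' p'.1 * b x' p'.2) p))) -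
      (∑ x, ∑' y, 1 / (Fintype.card X : ℝ) * a x y *
        Real.logb (Fintype.card X) (a x y / (1 / (Fintype.card X : ℝ) * S1 a y))) ≥
      -Real.logb (Fintype.card X)
        (1 - 1 / (Fintype.card X : ℝ) ^ 2 *
          ∑ x : X, ∑ x' : X, Zb a x x' ^ 2 * (1 - Zb b x x')) := by
  classical
  set c : ℝ := (Fintype.card X : ℝ) with hcdef
  have hc2 : (2:ℝ) ≤ c := by rw [hcdef]; exact_mod_cast hq
  have hc1 : (1:ℝ) < c := by linarith
  have hc0 : (0:ℝ) < c := by linarith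
  have hlc : 0 < Real.log c := Real.log_pos hc1
  have hu0 : (0:ℝ) < 1 / c := by positivity
  set P : X → Y × Y → ℝ := fun x' p' => a x' p'.1 * b x' p'.2 with hPdef
  have hP0 : ∀ x p, 0 ≤ P x p := prod_channel_nonneg ha0 hb0
  have hP1 : ∀ x, HasSum (P x) 1 := prod_channel_hasSum ha0 ha1 hb0 hb1
  -- summability of the integrands
  have hgBsum : ∀ x, Summable (fun p : Y × Y => 1 / c * (a x p.1 * b x p.2) *
      Real.logb c ((a x p.1 * b x p.2) / (1 / c * S1 P p))) := by
    intro x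
    exact integrand_summable hc1 (hP0 x) (le_S1 hP0 x) (hP1 x).summable
      (hasSum_S1 hP1).summable
  have hgAsum : ∀ x, Summable (fun y => 1 / c * a x y *
      Real.logb c (a x y / (1 / c * S1 a y))) := by
    intro x
    exact integrand_summable hc1 (ha0 x) (le_S1 ha0 x) (ha1 x).summable
      (hasSum_S1 ha1).summable
  have hprodsum : ∀ x, Summable (fun p : Y × Y =>
      (1 / c * a x p.1 * Real.logb c (a x p.1 / (1 / c * S1 a p.1))) * b x p.2) := by
    intro x
    have h1 : Summable (fun p : Y × Y =>
        |1 / c * a x p.1 * Real.logb c (a x p.1 / (1 / c * S1 a p.1))| * b x p.2) :=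
      ((hgAsum x).abs).mul_of_nonneg (hb1 x).summable (fun y => abs_nonneg _) (hb0 x)
    apply Summable.of_abs
    apply h1.congr
    intro p
    rw [eq_comm, abs_mul, abs_of_nonneg (hb0 x p.2)]
  -- pointwise difference identity
  have hpt : ∀ x (p : Y × Y),
      1 / c * (a x p.1 * b x p.2) * Real.logb c ((a x p.1 * b x p.2) / (1 / c * S1 P p)) -
        (1 / c * a x p.1 * Real.logb c (a x p.1 / (1 / c * S1 a p.1))) * b x p.2 =
      1 / c * (a x p.1 * b x p.2) * Real.logb c (b x p.2 * S1 a p.1 / S1 P p) := by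
    intro x p
    rcases eq_or_ne (a x p.1 * b x p.2) 0 with h0 | h0
    · rcases mul_eq_zero.mp h0 with h | h
      · simp [h]
      · simp [h]
    · have hane : a x p.1 ≠ 0 := left_ne_zero_of_mul h0
      have hbne : b x p.2 ≠ 0 := right_ne_zero_of_mul h0
      have hap : 0 < a x p.1 := lt_of_le_of_ne (ha0 x p.1) (Ne.symm hane)
      have hbp : 0 < b x p.2 := lt_of_le_of_ne (hb0 x p.2) (Ne.symm hbne)
      have hS1a : 0 < S1 a p.1 := lt_of_lt_of_le hap (le_S1 ha0 x p.1)
      have hSP : 0 < S1 P p := lt_of_lt_of_le (mul_pos hap hbp) (le_S1 hP0 x p)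
      have h1 : (a x p.1 * b x p.2) / (1 / c * S1 P p) ≠ 0 :=
        (div_pos (mul_pos hap hbp) (mul_pos hu0 hSP)).ne'
      have h2 : a x p.1 / (1 / c * S1 a p.1) ≠ 0 :=
        (div_pos hap (mul_pos hu0 hS1a)).ne'
      have key : Real.logb c ((a x p.1 * b x p.2) / (1 / c * S1 P p)) -
          Real.logb c (a x p.1 / (1 / c * S1 a p.1)) =
          Real.logb c (b x p.2 * S1 a p.1 / S1 P p) := by
        rw [← Real.logb_div h1 h2]
        congr 1
        field_simp
      rw [← key]
      ring
  have hgCsum : ∀ x, Summable (fun p : Y × Y =>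
      1 / c * (a x p.1 * b x p.2) * Real.logb c (b x p.2 * S1 a p.1 / S1 P p)) := by
    intro x
    exact ((hgBsum x).sub (hprodsum x)).congr (hpt x)
  -- the difference of capacities
  have hgoal : (∑ x, ∑' p : Y × Y, 1 / c * (a x p.1 * b x p.2) *
        Real.logb c ((a x p.1 * b x p.2) / (1 / c * S1 P p))) -
      (∑ x, ∑' y, 1 / c * a x y * Real.logb c (a x y / (1 / c * S1 a y))) =
      ∑ x, ∑' p : Y × Y, 1 / c * (a x p.1 * b x p.2) *
        Real.logb c (b x p.2 * S1 a p.1 / S1 P p) := by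
    rw [← Finset.sum_sub_distrib]
    apply Finset.sum_congr rfl
    intro x _
    have hext : ∑' y, 1 / c * a x y * Real.logb c (a x y / (1 / c * S1 a y)) =
        ∑' p : Y × Y, (1 / c * a x p.1 * Real.logb c (a x p.1 / (1 / c * S1 a p.1))) * b x p.2 := by
      have h := ((hgAsum x).hasSum.mul (hb1 x) (hprodsum x)).tsum_eq
      rw [mul_one] at h
      exact h.symm
    rw [hext, ← Summable.tsum_sub (hgBsum x) (hprodsum x)]
    exact tsum_congr (hpt x)
  rw [hgoal]
  -- switch to natural logarithms over the flattened index
  have hFFsum : ∀ x, Summable (fun p : Y × Y =>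
      1 / c * (a x p.1 * b x p.2) * Real.log (b x p.2 * S1 a p.1 / S1 P p)) := by
    intro x
    apply ((hgCsum x).mul_right (Real.log c)).congr
    intro p
    rw [Real.logb]
    field_simp
  have hrep : ∑ x, ∑' p : Y × Y, 1 / c * (a x p.1 * b x p.2) *
        Real.logb c (b x p.2 * S1 a p.1 / S1 P p) =
      (∑' i : X × Y × Y, 1 / c * (a i.1 i.2.1 * b i.1 i.2.2) *
        Real.log (b i.1 i.2.2 * S1 a i.2.1 / S1 P i.2)) / Real.log c := by
    have hflat : ∑' i : X × Y × Y, 1 / c * (a i.1 i.2.1 * b i.1 i.2.2) *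
        Real.log (b i.1 i.2.2 * S1 a i.2.1 / S1 P i.2) =
        ∑ x, ∑' p : Y × Y, 1 / c * (a x p.1 * b x p.2) *
          Real.log (b x p.2 * S1 a p.1 / S1 P p) :=
      tsum_prod_fintype hFFsum
    rw [hflat, eq_div_iff hlc.ne', Finset.sum_mul]
    apply Finset.sum_congr rfl
    intro x _
    rw [← tsum_mul_right]
    apply tsum_congr
    intro p
    rw [Real.logb]
    field_simp
  rw [hrep, ge_iff_le, Real.logb, ← neg_div]
  rw [div_le_div_iff_of_pos_right hlc]
  -- Gibbs / Jensen step with Cauchy-Schwarz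
  set pp : X × Y × Y → ℝ := fun i => 1 / c * (a i.1 i.2.1 * b i.1 i.2.2) with hppdef
  set tt : X × Y × Y → ℝ := fun i => Real.sqrt (S1 P i.2 / (b i.1 i.2.2 * S1 a i.2.1)) with httdef
  have hpp0 : ∀ i, 0 ≤ pp i := fun i => mul_nonneg hu0.le (mul_nonneg (ha0 _ _) (hb0 _ _))
  have hpp1 : HasSum pp 1 := by
    have hfib : ∀ x, HasSum (fun p : Y × Y => 1 / c * (a x p.1 * b x p.2)) (1 / c * 1) :=
      fun x => (hP1 x).mul_left (1 / c)
    have h := hasSum_prod_fintype (f := fun x (p : Y × Y) => 1 / c * (a x p.1 * b x p.2))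
      (v := fun _ => 1 / c * 1) hfib
    have h1 : (∑ _x : X, 1 / c * 1) = 1 := by
      rw [Finset.sum_const, Finset.card_univ, nsmul_eq_mul, mul_one, hcdef]
      have : (Fintype.card X : ℝ) ≠ 0 := by positivity
      field_simp
    rw [h1] at h
    exact h
  have htt0 : ∀ i, 0 ≤ tt i := fun i => Real.sqrt_nonneg _
  have httpos : ∀ i, pp i ≠ 0 → 0 < tt i := by
    intro i hne
    have h0 : a i.1 i.2.1 * b i.1 i.2.2 ≠ 0 := by
      intro h
      apply hne
      rw [hppdef]
      simp [h]
    have hap : 0 < a i.1 i.2.1 := lt_of_le_of_ne (ha0 _ _) (Ne.symm (left_ne_zero_of_mul h0))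
    have hbp : 0 < b i.1 i.2.2 := lt_of_le_of_ne (hb0 _ _) (Ne.symm (right_ne_zero_of_mul h0))
    have hS1a : 0 < S1 a i.2.1 := lt_of_lt_of_le hap (le_S1 ha0 i.1 i.2.1)
    have hSP : 0 < S1 P i.2 := lt_of_lt_of_le (mul_pos hap hbp) (le_S1 hP0 i.1 i.2)
    exact Real.sqrt_pos.mpr (div_pos hSP (mul_pos hbp hS1a))
  have hFF_eq : ∀ i : X × Y × Y, 1 / c * (a i.1 i.2.1 * b i.1 i.2.2) *
      Real.log (b i.1 i.2.2 * S1 a i.2.1 / S1 P i.2) = -2 * (pp i * Real.log (tt i)) := by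
    intro i
    rcases eq_or_ne (a i.1 i.2.1 * b i.1 i.2.2) 0 with h0 | h0
    · have hpz : pp i = 0 := by rw [hppdef]; simp [h0]
      rw [h0, hpz]
      ring
    · have hap : 0 < a i.1 i.2.1 := lt_of_le_of_ne (ha0 _ _) (Ne.symm (left_ne_zero_of_mul h0))
      have hbp : 0 < b i.1 i.2.2 := lt_of_le_of_ne (hb0 _ _) (Ne.symm (right_ne_zero_of_mul h0))
      have hS1a : 0 < S1 a i.2.1 := lt_of_lt_of_le hap (le_S1 ha0 i.1 i.2.1)
      have hSP : 0 < S1 P i.2 := lt_of_lt_of_le (mul_pos hap hbp) (le_S1 hP0 i.1 i.2)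
      have harg : 0 < S1 P i.2 / (b i.1 i.2.2 * S1 a i.2.1) := div_pos hSP (mul_pos hbp hS1a)
      have hlogtt : Real.log (tt i) =
          Real.log (S1 P i.2 / (b i.1 i.2.2 * S1 a i.2.1)) / 2 := Real.log_sqrt harg.le
      have hloginv : Real.log (b i.1 i.2.2 * S1 a i.2.1 / S1 P i.2) =
          -Real.log (S1 P i.2 / (b i.1 i.2.2 * S1 a i.2.1)) := by
        rw [← Real.log_inv, inv_div]
      rw [hloginv, hlogtt, hppdef]
      ring
  have hFFsum_flat : Summable (fun i : X × Y × Y => 1 / c * (a i.1 i.2.1 * b i.1 i.2.2) *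
      Real.log (b i.1 i.2.2 * S1 a i.2.1 / S1 P i.2)) := summable_prod_fintype hFFsum
  have hpt_sum : Summable (fun i => pp i * Real.log (tt i)) :=
    (hFFsum_flat.mul_right (-(1/2) : ℝ)).congr (fun i => by have := hFF_eq i; linarith)
  set FFf : X × Y × Y → ℝ := fun i => Real.sqrt (1 / c * S1 P i.2) with hFFfdef
  set GGg : X × Y × Y → ℝ := fun i =>
    Real.sqrt (1 / c) * (a i.1 i.2.1 * Real.sqrt (b i.1 i.2.2)) / Real.sqrt (S1 a i.2.1)
    with hGGgdef
  have hphi : ∀ i, pp i * tt i = FFf i * GGg i := by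
    intro i
    rcases eq_or_ne (a i.1 i.2.1) 0 with h0 | h0
    · rw [hppdef, httdef, hFFfdef, hGGgdef]
      simp [h0]
    rcases eq_or_ne (b i.1 i.2.2) 0 with h1 | h1
    · rw [hppdef, httdef, hFFfdef, hGGgdef]
      simp [h1]
    · have hap : 0 < a i.1 i.2.1 := lt_of_le_of_ne (ha0 _ _) (Ne.symm h0)
      have hbp : 0 < b i.1 i.2.2 := lt_of_le_of_ne (hb0 _ _) (Ne.symm h1)
      have hS1a : 0 < S1 a i.2.1 := lt_of_lt_of_le hap (le_S1 ha0 i.1 i.2.1)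
      have hSP : 0 < S1 P i.2 := lt_of_lt_of_le (mul_pos hap hbp) (le_S1 hP0 i.1 i.2)
      rw [hppdef, httdef, hFFfdef, hGGgdef]
      simp only
      rw [Real.sqrt_div hSP.le, Real.sqrt_mul hbp.le, Real.sqrt_mul hu0.le]
      have hsb : Real.sqrt (b i.1 i.2.2) ≠ 0 := (Real.sqrt_pos.mpr hbp).ne'
      have hss : Real.sqrt (S1 a i.2.1) ≠ 0 := (Real.sqrt_pos.mpr hS1a).ne'
      have hb2 : Real.sqrt (b i.1 i.2.2) * Real.sqrt (b i.1 i.2.2) = b i.1 i.2.2 :=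
        Real.mul_self_sqrt hbp.le
      have hu2 : Real.sqrt (1 / c) * Real.sqrt (1 / c) = 1 / c :=
        Real.mul_self_sqrt hu0.le
      rw [← hu2, ← hb2]
      field_simp
      simp only [Real.sqrt_mul_self (Real.sqrt_nonneg _), Real.sqrt_sq (Real.sqrt_nonneg _)]
      have hc2' : Real.sqrt c * Real.sqrt c = c := Real.mul_self_sqrt hc0.le
      ring
  have hGG_sq_le : ∀ i, GGg i ^ 2 ≤ pp i := by
    intro i
    rcases eq_or_ne (S1 a i.2.1) 0 with h0 | h0
    · have hz := eq_zero_of_S1_eq_zero ha0 h0 i.1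
      rw [hGGgdef]
      simp [hz]
      exact hpp0 i
    · have hS1a : 0 < S1 a i.2.1 := lt_of_le_of_ne (S1_nonneg ha0 i.2.1) (Ne.symm h0)
      have hGg2 : GGg i ^ 2 = 1 / c * ((a i.1 i.2.1) ^ 2 * b i.1 i.2.2) / S1 a i.2.1 := by
        rw [hGGgdef]
        simp only
        rw [div_pow, mul_pow, mul_pow, Real.sq_sqrt hu0.le, Real.sq_sqrt (hb0 _ _),
          Real.sq_sqrt (S1_nonneg ha0 i.2.1)]
      rw [hGg2, hppdef]
      simp only
      rw [div_le_iff₀ hS1a]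
      have h1 : a i.1 i.2.1 ≤ S1 a i.2.1 := le_S1 ha0 i.1 i.2.1
      nlinarith [ha0 i.1 i.2.1, hb0 i.1 i.2.2, hu0.le,
        mul_nonneg (mul_nonneg hu0.le (ha0 i.1 i.2.1)) (hb0 i.1 i.2.2)]
  have hFFf_sq_summable : Summable (fun i : X × Y × Y => FFf i ^ 2) := by
    have h := summable_prod_fintype (f := fun (_ : X) (p : Y × Y) => 1 / c * S1 P p)
      (fun _ => (hasSum_S1 hP1).summable.mul_left (1 / c))
    apply h.congr
    intro i
    rw [hFFfdef]
    exact (Real.sq_sqrt (mul_nonneg hu0.le (S1_nonneg hP0 i.2))).symm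
  have hGGg_sq_summable : Summable (fun i => GGg i ^ 2) :=
    Summable.of_nonneg_of_le (fun i => sq_nonneg _) hGG_sq_le hpp1.summable
  have hppt_sum : Summable (fun i => pp i * tt i) := by
    apply Summable.of_nonneg_of_le (fun i => mul_nonneg (hpp0 i) (htt0 i)) (fun i => ?_)
      ((hFFf_sq_summable.add hGGg_sq_summable).div_const 2)
    rw [hphi i]
    nlinarith [sq_nonneg (FFf i - GGg i)]
  obtain ⟨i0, hi0⟩ : ∃ i, pp i ≠ 0 := by
    by_contra h
    push_neg at h
    exact one_ne_zero (hpp1.unique (by rw [show pp = fun _ => (0:ℝ) from funext h]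
                                       exact hasSum_zero))
  have hcc_pos : 0 < ∑' i, pp i * tt i := by
    have h1 := Summable.le_tsum hppt_sum i0 (fun j _ => mul_nonneg (hpp0 j) (htt0 j))
    have h2 := mul_pos (lt_of_le_of_ne (hpp0 i0) (Ne.symm hi0)) (httpos i0 hi0)
    linarith
  have hGibbs := tsum_mul_log_le hpp0 hpp1 htt0 httpos hppt_sum hpt_sum
  have hE_lb : -2 * Real.log (∑' i, pp i * tt i) ≤
      ∑' i : X × Y × Y, 1 / c * (a i.1 i.2.1 * b i.1 i.2.2) *
        Real.log (b i.1 i.2.2 * S1 a i.2.1 / S1 P i.2) := by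
    rw [tsum_congr hFF_eq, tsum_mul_left]
    have h2 : -(2:ℝ) ≤ 0 := by norm_num
    nlinarith [hGibbs]
  -- Cauchy-Schwarz over the output pair
  set Ff : Y × Y → ℝ := fun p => Real.sqrt (1 / c * S1 P p) with hFfdef
  set Gg : Y × Y → ℝ := fun p =>
    Real.sqrt (1 / c) * (∑ x, a x p.1 * Real.sqrt (b x p.2)) / Real.sqrt (S1 a p.1) with hGgdef
  have hGg0 : ∀ p, 0 ≤ Gg p := fun p =>
    div_nonneg (mul_nonneg (Real.sqrt_nonneg _)
      (Finset.sum_nonneg fun x _ => mul_nonneg (ha0 x p.1) (Real.sqrt_nonneg _)))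
      (Real.sqrt_nonneg _)
  have hsumGG : ∀ p : Y × Y, ∑ x, FFf (x, p) * GGg (x, p) = Ff p * Gg p := by
    intro p
    rw [hFfdef, hGgdef, hFFfdef, hGGgdef]
    simp only
    rw [← Finset.mul_sum]
    congr 1
    rw [← Finset.sum_div, ← Finset.mul_sum]
  have hfib_ppt : ∀ x, Summable (fun p : Y × Y => FFf (x, p) * GGg (x, p)) := by
    intro x
    have hinj : Function.Injective (fun p : Y × Y => ((x, p) : X × Y × Y)) :=
      fun p q h => by simpa using h
    have h := hppt_sum.comp_injective hinj
    exact h.congr (fun p => hphi (x, p))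
  have hcc_flat : ∑' i, pp i * tt i = ∑' p : Y × Y, Ff p * Gg p := by
    rw [tsum_congr hphi]
    rw [tsum_prod_fintype (f := fun x (p : Y × Y) => FFf (x, p) * GGg (x, p)) hfib_ppt]
    rw [← Summable.tsum_finsetSum (fun x _ => hfib_ppt x)]
    exact tsum_congr hsumGG
  have hFf_sq_summable : Summable (fun p : Y × Y => Ff p ^ 2) := by
    apply ((hasSum_S1 hP1).summable.mul_left (1 / c)).congr
    intro p
    rw [hFfdef]
    exact (Real.sq_sqrt (mul_nonneg hu0.le (S1_nonneg hP0 p))).symm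
  have hFf_sq : ∑' p : Y × Y, Ff p ^ 2 = 1 := by
    have h : ∀ p : Y × Y, Ff p ^ 2 = 1 / c * S1 P p := fun p => by
      rw [hFfdef]; exact Real.sq_sqrt (mul_nonneg hu0.le (S1_nonneg hP0 p))
    rw [tsum_congr h, ((hasSum_S1 hP1).mul_left (1 / c)).tsum_eq, hcdef]
    have : (Fintype.card X : ℝ) ≠ 0 := by positivity
    field_simp
  have hGg_sq_le : ∀ p : Y × Y, Gg p ^ 2 ≤ 1 / c * S1 P p := by
    intro p
    rcases eq_or_ne (S1 a p.1) 0 with h0 | h0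
    · have hz := eq_zero_of_S1_eq_zero ha0 h0
      rw [hGgdef]
      simp [hz]
      exact mul_nonneg (inv_nonneg.mpr hc0.le) (S1_nonneg hP0 p)
    · have hS1a : 0 < S1 a p.1 := lt_of_le_of_ne (S1_nonneg ha0 p.1) (Ne.symm h0)
      have hcs := Finset.sum_mul_sq_le_sq_mul_sq Finset.univ
        (fun x => Real.sqrt (a x p.1)) (fun x => Real.sqrt (a x p.1) * Real.sqrt (b x p.2))
      have e1 : ∀ x : X, Real.sqrt (a x p.1) * (Real.sqrt (a x p.1) * Real.sqrt (b x p.2)) =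
          a x p.1 * Real.sqrt (b x p.2) := fun x => by
        rw [← mul_assoc, Real.mul_self_sqrt (ha0 x p.1)]
      have e2 : ∀ x : X, Real.sqrt (a x p.1) ^ 2 = a x p.1 := fun x => Real.sq_sqrt (ha0 x p.1)
      have e3 : ∀ x : X, (Real.sqrt (a x p.1) * Real.sqrt (b x p.2)) ^ 2 = a x p.1 * b x p.2 :=
        fun x => by rw [mul_pow, Real.sq_sqrt (ha0 x p.1), Real.sq_sqrt (hb0 x p.2)]
      rw [Finset.sum_congr rfl (fun x _ => e1 x), Finset.sum_congr rfl (fun x _ => e2 x),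
        Finset.sum_congr rfl (fun x _ => e3 x)] at hcs
      have hGg2 : Gg p ^ 2 = 1 / c * (∑ x, a x p.1 * Real.sqrt (b x p.2)) ^ 2 / S1 a p.1 := by
        rw [hGgdef]
        simp only
        rw [div_pow, mul_pow, Real.sq_sqrt hu0.le, Real.sq_sqrt (S1_nonneg ha0 p.1)]
      rw [hGg2, div_le_iff₀ hS1a]
      calc 1 / c * (∑ x, a x p.1 * Real.sqrt (b x p.2)) ^ 2
          ≤ 1 / c * (S1 a p.1 * S1 P p) := mul_le_mul_of_nonneg_left hcs hu0.le
        _ = 1 / c * S1 P p * S1 a p.1 := by ring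
  have hGg_sq_summable : Summable (fun p : Y × Y => Gg p ^ 2) :=
    Summable.of_nonneg_of_le (fun p => sq_nonneg _) hGg_sq_le
      ((hasSum_S1 hP1).summable.mul_left (1 / c))
  have hcs2 : (∑' i, pp i * tt i) ^ 2 ≤ ∑' p : Y × Y, Gg p ^ 2 := by
    rw [hcc_flat]
    have h := tsum_mul_sq_le (f := Ff) (g := Gg) (fun p => Real.sqrt_nonneg _) hGg0
      hFf_sq_summable hGg_sq_summable
    rwa [hFf_sq, one_mul] at h
  -- identify the second factor
  have hZsum : ∀ x x' : X, Summable (fun y => Real.sqrt (b x y) * Real.sqrt (b x' y)) :=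
    fun x x' => (Zb_summable hb0 hb1 x x').congr (fun y => Real.sqrt_mul (hb0 x y) _)
  have hterm_sum : ∀ x x' : X, Summable (fun q : Y × Y =>
      1 / c * (a x q.1 * a x' q.1 / S1 a q.1 * (Real.sqrt (b x q.2) * Real.sqrt (b x' q.2)))) :=
    fun x x' => (((Tq_summable ha0 ha1 x x').mul_of_nonneg (hZsum x x')
      (fun y => Tq_summand_nonneg ha0 x x' y)
      (fun y => mul_nonneg (Real.sqrt_nonneg _) (Real.sqrt_nonneg _)))).mul_left (1 / c)
  have hA'_eq : ∑' p : Y × Y, Gg p ^ 2 = ∑ x, ∑ x', 1 / c * (Tq a x x' * Zb b x x') := by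
    have hptw : ∀ p : Y × Y, Gg p ^ 2 = ∑ x, ∑ x',
        1 / c * (a x p.1 * a x' p.1 / S1 a p.1 * (Real.sqrt (b x p.2) * Real.sqrt (b x' p.2))) := by
      intro p
      rcases eq_or_ne (S1 a p.1) 0 with h0 | h0
      · have hz := eq_zero_of_S1_eq_zero ha0 h0
        rw [hGgdef]
        simp [hz]
      · have hGg2 : Gg p ^ 2 = 1 / c * (∑ x, a x p.1 * Real.sqrt (b x p.2)) ^ 2 / S1 a p.1 := by
          rw [hGgdef]
          simp only
          rw [div_pow, mul_pow, Real.sq_sqrt hu0.le, Real.sq_sqrt (S1_nonneg ha0 p.1)]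
        rw [hGg2, sq, Finset.sum_mul_sum]
        rw [Finset.mul_sum, Finset.sum_div]
        apply Finset.sum_congr rfl
        intro x _
        rw [Finset.mul_sum, Finset.sum_div]
        apply Finset.sum_congr rfl
        intro x' _
        field_simp
    rw [tsum_congr hptw]
    rw [Summable.tsum_finsetSum (fun x (_ : x ∈ Finset.univ) => summable_sum (fun x' _ => hterm_sum x x'))]
    apply Finset.sum_congr rfl
    intro x _
    rw [Summable.tsum_finsetSum (fun x' (_ : x' ∈ Finset.univ) => hterm_sum x x')]
    apply Finset.sum_congr rfl
    intro x' _
    rw [tsum_mul_left]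
    congr 1
    have hZ : ∑' y, Real.sqrt (b x y) * Real.sqrt (b x' y) = Zb b x x' :=
      tsum_congr (fun y => (Real.sqrt_mul (hb0 x y) _).symm)
    have hmul := ((Tq_summable ha0 ha1 x x').hasSum.mul (hZsum x x').hasSum
      ((Tq_summable ha0 ha1 x x').mul_of_nonneg (hZsum x x')
        (fun y => Tq_summand_nonneg ha0 x x' y)
        (fun y => mul_nonneg (Real.sqrt_nonneg _) (Real.sqrt_nonneg _)))).tsum_eq
    rw [hmul, hZ]
    rfl
  -- bound the second factor by the Bhattacharyya expression
  have hsum_le : ∑ x, ∑ x', 1 / c * (Tq a x x' * Zb b x x') ≤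
      1 - 1 / c ^ 2 * ∑ x, ∑ x', Zb a x x' ^ 2 * (1 - Zb b x x') := by
    have h2 : ∑ x, ∑ x', (1 / c * Tq a x x') = 1 := by
      have : ∀ x : X, ∑ x', (1 / c * Tq a x x') = 1 / c * ∑ x', Tq a x x' :=
        fun x => (Finset.mul_sum _ _ _).symm
      rw [Finset.sum_congr rfl (fun x _ => this x), ← Finset.mul_sum, sum_Tq ha0 ha1, hcdef]
      have : (Fintype.card X : ℝ) ≠ 0 := by positivity
      field_simp
    have h3 : ∀ x x' : X, 1 / c * (1 / c * Zb a x x' ^ 2 * (1 - Zb b x x')) ≤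
        1 / c * (Tq a x x' * (1 - Zb b x x')) := by
      intro x x'
      apply mul_le_mul_of_nonneg_left _ hu0.le
      apply mul_le_mul_of_nonneg_right _
        (by linarith [Zb_le_one hb0 hb1 x x'] : (0:ℝ) ≤ 1 - Zb b x x')
      have h := Zb_sq_le_Tq ha0 ha1 x x'
      rw [← hcdef] at h
      rw [one_div, inv_mul_le_iff₀ hc0]
      exact h
    have h4 : ∑ x, ∑ x', 1 / c * (1 / c * Zb a x x' ^ 2 * (1 - Zb b x x')) =
        1 / c ^ 2 * ∑ x, ∑ x', Zb a x x' ^ 2 * (1 - Zb b x x') := by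
      rw [Finset.mul_sum]
      apply Finset.sum_congr rfl
      intro x _
      rw [Finset.mul_sum]
      apply Finset.sum_congr rfl
      intro x' _
      ring
    have h5 : ∑ x, ∑ x', 1 / c * (1 / c * Zb a x x' ^ 2 * (1 - Zb b x x')) ≤
        ∑ x, ∑ x', 1 / c * (Tq a x x' * (1 - Zb b x x')) :=
      Finset.sum_le_sum (fun x _ => Finset.sum_le_sum (fun x' _ => h3 x x'))
    have h6 : ∑ x, ∑ x', 1 / c * (Tq a x x' * Zb b x x') =
        (∑ x, ∑ x', (1 / c * Tq a x x')) -
          ∑ x, ∑ x', 1 / c * (Tq a x x' * (1 - Zb b x x')) := by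
      rw [← Finset.sum_sub_distrib]
      apply Finset.sum_congr rfl
      intro x _
      rw [← Finset.sum_sub_distrib]
      apply Finset.sum_congr rfl
      intro x' _
      ring
    rw [h6, h2]
    linarith [h5, h4 ▸ h5]
  -- conclude
  have hccC : (∑' i, pp i * tt i) ^ 2 ≤
      1 - 1 / c ^ 2 * ∑ x, ∑ x', Zb a x x' ^ 2 * (1 - Zb b x x') :=
    le_trans hcs2 (le_trans (le_of_eq hA'_eq) hsum_le)
  calc -Real.log (1 - 1 / c ^ 2 * ∑ x, ∑ x', Zb a x x' ^ 2 * (1 - Zb b x x'))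
      ≤ -Real.log ((∑' i, pp i * tt i) ^ 2) :=
        neg_le_neg (Real.log_le_log (pow_pos hcc_pos 2) hccC)
    _ = -2 * Real.log (∑' i, pp i * tt i) := by
        rw [Real.log_pow]
        push_cast
        ring
    _ ≤ _ := hE_lb


/-- cut-off rate lower bound on `I(W') - I(W)` for
`W'(y₁,y₂|x) = W(y₁|σ(x)) W(y₂|τ(x))`. -/
theorem symCap_diff_ge {X Y : Type*} [Fintype X] [Countable Y]
    (hq : 2 ≤ Fintype.card X) (W : X → Y → ℝ) (hW : IsChannel W)
    (σ τ : Equiv.Perm X) :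
    symCap (fun (x : X) (p : Y × Y) => W (σ x) p.1 * W (τ x) p.2) - symCap W ≥
      -Real.logb (Fintype.card X)
        (1 - (1 / (Fintype.card X : ℝ) ^ 2) *
          ∑ z : X, ∑ x : X,
            Zb W z x ^ 2 * (1 - Zb W (τ (σ⁻¹ z)) (τ (σ⁻¹ x)))) := by
  classical
  obtain ⟨hW0, hW1⟩ := hW
  have ha0 : ∀ x y, 0 ≤ (fun x y => W (σ x) y) x y := fun x y => hW0 _ y
  have ha1 : ∀ x, HasSum ((fun x y => W (σ x) y) x) 1 := fun x => hW1 _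
  have hb0 : ∀ x y, 0 ≤ (fun x y => W (τ x) y) x y := fun x y => hW0 _ y
  have hb1 : ∀ x, HasSum ((fun x y => W (τ x) y) x) 1 := fun x => hW1 _
  have key := main_ineq hq (fun x y => W (σ x) y) (fun x y => W (τ x) y) ha0 ha1 hb0 hb1
  have h1 : symCap (fun (x : X) (p : Y × Y) => W (σ x) p.1 * W (τ x) p.2) =
      ∑ x, ∑' p : Y × Y, 1 / (Fintype.card X : ℝ) * ((fun x y => W (σ x) y) x p.1 *
          (fun x y => W (τ x) y) x p.2) *
        Real.logb (Fintype.card X) (((fun x y => W (σ x) y) x p.1 *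
            (fun x y => W (τ x) y) x p.2) /
          (1 / (Fintype.card X : ℝ) *
            S1 (fun x' (p' : Y × Y) => (fun x y => W (σ x) y) x' p'.1 *
              (fun x y => W (τ x) y) x' p'.2) p)) := rfl
  have hden : ∀ y : Y, S1 (fun x y => W (σ x) y) y = ∑ x', W x' y :=
    fun y => Equiv.sum_comp σ (fun z => W z y)
  have h2 : symCap W = ∑ x, ∑' y, 1 / (Fintype.card X : ℝ) * (fun x y => W (σ x) y) x y *
      Real.logb (Fintype.card X) ((fun x y => W (σ x) y) x y /
        (1 / (Fintype.card X : ℝ) * S1 (fun x y => W (σ x) y) y)) := by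
    rw [symCap]
    rw [← Equiv.sum_comp σ (fun z => ∑' y, 1 / (Fintype.card X : ℝ) * W z y *
      Real.logb (Fintype.card X) (W z y / (1 / (Fintype.card X : ℝ) * ∑ x', W x' y)))]
    apply Finset.sum_congr rfl
    intro x _
    apply tsum_congr
    intro y
    rw [hden y]
  have h3 : ∑ z : X, ∑ x : X, Zb W z x ^ 2 * (1 - Zb W (τ (σ⁻¹ z)) (τ (σ⁻¹ x))) =
      ∑ x : X, ∑ x' : X, Zb (fun x y => W (σ x) y) x x' ^ 2 *
        (1 - Zb (fun x y => W (τ x) y) x x') := by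
    rw [← Equiv.sum_comp σ (fun z => ∑ w : X, Zb W z w ^ 2 *
      (1 - Zb W (τ (σ⁻¹ z)) (τ (σ⁻¹ w))))]
    apply Finset.sum_congr rfl
    intro x _
    rw [← Equiv.sum_comp σ (fun w => Zb W (σ x) w ^ 2 *
      (1 - Zb W (τ (σ⁻¹ (σ x))) (τ (σ⁻¹ w))))]
    apply Finset.sum_congr rfl
    intro x' _
    simp only [Equiv.Perm.inv_def, Equiv.symm_apply_apply]
    rfl
  rw [h1, h2, h3]
  exact key


end Polar
end
end
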